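/- arXiv:1609.08054 — 3 statements merged into one kernel-verified Lean document; each statement's English description precedes it below -/
import Mathlib

section
/- If N is a strongly 2-absorbing second submodule of M and K is a submodule of M with N ⊄ K, then (K :_R N) is a 2-absorbing ideal of R. -/
open Pointwise

/-- A nonzero submodule `N` is strongly 2-absorbing second (ideal form): for all
ideals `I J` of `R` and submodules `K` of `M` with `I • J • N ⊆ K`, either
`I • N ⊆ K` or `J • N ⊆ K` or `I * J ⊆ Ann(N)`. -/
def IsStrongly2AbsorbingSecond {R M : Type*} [CommRing R] [AddCommGroup M] [Module R M]
    (N : Submodule R M) : Prop :=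
  N ≠ ⊥ ∧ ∀ (I J : Ideal R) (K : Submodule R M), I • J • N ≤ K →
    I • N ≤ K ∨ J • N ≤ K ∨ I * J ≤ N.annihilator

/-- A proper ideal `I` is 2-absorbing if `a*b*c ∈ I` implies `a*b ∈ I` or `a*c ∈ I`
or `b*c ∈ I`. -/
def Is2AbsorbingIdeal {R : Type*} [CommRing R] (I : Ideal R) : Prop :=
  I ≠ ⊤ ∧ ∀ a b c : R, a * b * c ∈ I → a * b ∈ I ∨ a * c ∈ I ∨ b * c ∈ I

theorem colon_2absorbing_of_strongly2AbsorbingSecond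
    {R M : Type*} [CommRing R] [AddCommGroup M] [Module R M]
    (N : Submodule R M) (hN : IsStrongly2AbsorbingSecond N)
    (K : Submodule R M) (hNK : ¬ N ≤ K) :
    Is2AbsorbingIdeal (K.colon N) := by
  obtain ⟨-, h2⟩ := hN
  constructor
  · intro htop
    apply hNK
    intro n hn
    have : (1 : R) ∈ K.colon N := htop ▸ Submodule.mem_top
    simpa using Submodule.mem_colon.mp this n hn
  · intro a b c habc
    -- K' = preimage of K under multiplication by c
    set K' : Submodule R M := K.comap (c • (LinearMap.id : M →ₗ[R] M)) with hK'
    have hmemK' : ∀ m : M, m ∈ K' ↔ c • m ∈ K := by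
      intro m; simp [hK']
    have key : Ideal.span {a} • Ideal.span {b} • N ≤ K' := by
      rw [Submodule.ideal_span_singleton_smul, Submodule.ideal_span_singleton_smul]
      rintro x hx
      obtain ⟨n, hn, rfl⟩ := hx
      obtain ⟨m, hm, rfl⟩ := hn
      rw [hmemK']
      have := Submodule.mem_colon.mp habc m hm
      simp only [DistribSMul.toLinearMap_apply]
      simpa [smul_smul, mul_comm, mul_left_comm, mul_assoc] using this
    rcases h2 (Ideal.span {a}) (Ideal.span {b}) K' key with h | h | h
    · right; left
      rw [Submodule.ideal_span_singleton_smul] at h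
      rw [Submodule.mem_colon]
      intro n hn
      have := h ⟨n, hn, rfl⟩
      rw [hmemK'] at this
      simpa [smul_smul, mul_comm, mul_left_comm, mul_assoc] using this
    · right; right
      rw [Submodule.ideal_span_singleton_smul] at h
      rw [Submodule.mem_colon]
      intro n hn
      have := h ⟨n, hn, rfl⟩
      rw [hmemK'] at this
      simpa [smul_smul, mul_comm, mul_left_comm, mul_assoc] using this
    · left
      rw [Ideal.span_singleton_mul_span_singleton] at h
      have hab : a * b ∈ N.annihilator := h (Ideal.mem_span_singleton_self _)
      rw [Submodule.mem_colon]
      intro n hn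
      have := Submodule.mem_annihilator.mp hab n hn
      rw [this]
      exact K.zero_mem
end

section
/- If N is a strongly 2-absorbing second submodule of M and I is an ideal of R, then Iⁿ•N = Iⁿ⁺¹•N for all n ≥ 2. -/
open Pointwise

theorem ideal_pow_smul_stabilizes
    {R M : Type*} [CommRing R] [AddCommGroup M] [Module R M]
    (N : Submodule R M) (hN : IsStrongly2AbsorbingSecond N) (I : Ideal R) :
    ∀ n : ℕ, 2 ≤ n → I ^ n • N = I ^ (n + 1) • N := by
  obtain ⟨-, h⟩ := hN
  have key := h I I (I • I • N) le_rfl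
  have main : I • N ≤ I • I • N → ∀ n : ℕ, 2 ≤ n → I ^ n • N = I ^ (n + 1) • N := by
    intro h1 n hn
    obtain ⟨m, rfl⟩ : ∃ m, n = m + 2 := ⟨n - 2, by omega⟩
    apply le_antisymm
    · calc I ^ (m + 2) • N = I ^ m • I • I • N := by
            rw [pow_succ, pow_succ, mul_smul, mul_smul]
        _ ≤ I ^ m • I • I • I • N := by
            exact smul_mono_right _ (smul_mono_right _ h1)
        _ = I ^ (m + 2 + 1) • N := by
            rw [pow_succ, pow_succ, pow_succ, mul_smul, mul_smul,
              mul_smul]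
    · calc I ^ (m + 2 + 1) • N = I ^ (m + 2) • I • N := by
            rw [pow_succ, mul_smul]
        _ ≤ I ^ (m + 2) • N := smul_mono_right _ Submodule.smul_le_right
  rcases key with h1 | h1 | h1
  · exact main h1
  · exact main h1
  · -- I * I ≤ annihilator, so I ^ n • N = ⊥ for n ≥ 2
    have hbot : ∀ n : ℕ, 2 ≤ n → I ^ n • N = ⊥ := by
      intro n hn
      rw [eq_bot_iff]
      intro x hx
      refine Submodule.smul_induction_on hx (fun r hr m hm => ?_) (fun a b ha hb => add_mem ha hb)
      have hr2 : r ∈ N.annihilator := by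
        apply h1
        have hle : I ^ n ≤ I * I := by
          rw [← sq]
          exact Ideal.pow_le_pow_right hn
        exact hle hr
      simpa using (Submodule.mem_annihilator.mp hr2 m hm)
    intro n hn
    rw [hbot n hn, hbot (n + 1) (by omega)]
end

section
/- If N is a strongly 2-absorbing second submodule of M and K a submodule of M with N ⊄ K, then either (K :_R N) is a prime ideal of R, or there exists a ∈ R such that (K :_R a•N) is a prime ideal of R. -/
open Pointwise

section Aux

variable {R : Type*} [CommRing R] {I : Ideal R}

/-- If `I` is 2-absorbing and `z ^ n ∈ I` then `z * z ∈ I`. -/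
lemma aux_sq_of_pow (hI : I ≠ ⊤)
    (hT : ∀ a b c : R, a * b * c ∈ I → a * b ∈ I ∨ a * c ∈ I ∨ b * c ∈ I) :
    ∀ n : ℕ, ∀ z : R, z ^ n ∈ I → z * z ∈ I := by
  intro n
  induction n using Nat.strong_induction_on with
  | _ n ih =>
    intro z hz
    match n, hz with
    | 0, hz => exact absurd (Ideal.eq_top_iff_one I |>.mpr (by simpa using hz)) hI
    | 1, hz => exact I.mul_mem_left z (by simpa using hz)
    | 2, hz => rwa [pow_two] at hz
    | (n+3), hz =>
      have hz' : z * z * z ^ (n+1) ∈ I := by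
        have : z * z * z ^ (n+1) = z ^ (n+3) := by ring
        rwa [this]
      rcases hT z z (z ^ (n+1)) hz' with h | h | h
      · exact h
      · have h' : z ^ (n+2) ∈ I := by
          have : z ^ (n+2) = z * z ^ (n+1) := by ring
          rwa [this]
        exact ih (n+2) (by omega) z h'
      · have h' : z ^ (n+2) ∈ I := by
          have : z ^ (n+2) = z * z ^ (n+1) := by ring
          rwa [this]
        exact ih (n+2) (by omega) z h'

/-- If `I` is 2-absorbing and `z ∈ √I` then `z * z ∈ I`. -/
lemma aux_sq (hI : I ≠ ⊤)
    (hT : ∀ a b c : R, a * b * c ∈ I → a * b ∈ I ∨ a * c ∈ I ∨ b * c ∈ I)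
    {z : R} (hz : z ∈ I.radical) : z * z ∈ I := by
  obtain ⟨n, hn⟩ := hz
  exact aux_sq_of_pow hI hT n z hn

/-- If `I` is 2-absorbing and `u, v ∈ √I` then `u * v ∈ I`. -/
lemma aux_radmul (hI : I ≠ ⊤)
    (hT : ∀ a b c : R, a * b * c ∈ I → a * b ∈ I ∨ a * c ∈ I ∨ b * c ∈ I)
    {u v : R} (hu : u ∈ I.radical) (hv : v ∈ I.radical) : u * v ∈ I := by
  have hu2 : u * u ∈ I := aux_sq hI hT hu
  have hv2 : v * v ∈ I := aux_sq hI hT hv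
  have h : u * v * (u + v) ∈ I := by
    have : u * v * (u + v) = (u * u) * v + (v * v) * u := by ring
    rw [this]
    exact add_mem (I.mul_mem_right _ hu2) (I.mul_mem_right _ hv2)
  rcases hT u v (u + v) h with h | h | h
  · exact h
  · have : u * v = u * (u + v) - u * u := by ring
    rw [this]; exact sub_mem h hu2
  · have : u * v = v * (u + v) - v * v := by ring
    rw [this]; exact sub_mem h hv2

/-- If `I` is 2-absorbing, `u, v ∉ √I` and `u * v ∈ √I`, then `u * v ∈ I`. -/
lemma aux_F2 (hI : I ≠ ⊤)
    (hT : ∀ a b c : R, a * b * c ∈ I → a * b ∈ I ∨ a * c ∈ I ∨ b * c ∈ I)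
    {u v : R} (hu : u ∉ I.radical) (hv : v ∉ I.radical) (huv : u * v ∈ I.radical) :
    u * v ∈ I := by
  have hsq : u * v * (u * v) ∈ I := by
    have := aux_sq hI hT huv
    exact this
  rcases hT u v (u * v) hsq with h | h | h
  · exact h
  · have h' : u * u * v ∈ I := by
      have : u * u * v = u * (u * v) := by ring
      rwa [this]
    rcases hT u u v h' with h'' | h'' | h''
    · exact absurd ⟨2, by rwa [pow_two]⟩ hu
    · exact h''
    · exact h''
  · have h' : v * v * u ∈ I := by
      have : v * v * u = v * (u * v) := by ring
      rwa [this]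
    rcases hT v v u h' with h'' | h'' | h''
    · exact absurd ⟨2, by rwa [pow_two]⟩ hv
    · rwa [mul_comm] at h''
    · rwa [mul_comm] at h''

end Aux

theorem colon_prime_or_exists
    {R M : Type*} [CommRing R] [AddCommGroup M] [Module R M]
    (N : Submodule R M) (hN : IsStrongly2AbsorbingSecond N)
    (K : Submodule R M) (hNK : ¬ N ≤ K) :
    (K.colon N).IsPrime ∨ ∃ a : R, (K.colon (a • N)).IsPrime := by
  -- the colon ideal is proper
  have hIne : K.colon N ≠ ⊤ := by
    intro h
    apply hNK
    intro n hn
    have h1 : (1 : R) ∈ K.colon N := h ▸ Submodule.mem_top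
    simpa using Submodule.mem_colon.mp h1 n hn
  -- the colon ideal is 2-absorbing
  have hT : ∀ a b c : R, a * b * c ∈ K.colon N →
      a * b ∈ K.colon N ∨ a * c ∈ K.colon N ∨ b * c ∈ K.colon N := by
    intro a b c habc
    have key := hN.2 (Ideal.span {a}) (Ideal.span {b})
      (K.comap (LinearMap.lsmul R M c)) ?_
    · rcases key with h | h | h
      · right; left
        rw [Submodule.ideal_span_singleton_smul] at h
        rw [Submodule.mem_colon]
        intro n hn
        have hmem : a • n ∈ a • N := Submodule.smul_mem_pointwise_smul n a N hn
        have := h hmem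
        rw [Submodule.mem_comap] at this
        have h2 : c • a • n ∈ K := this
        rw [smul_smul] at h2
        rwa [mul_comm a c]
      · right; right
        rw [Submodule.ideal_span_singleton_smul] at h
        rw [Submodule.mem_colon]
        intro n hn
        have hmem : b • n ∈ b • N := Submodule.smul_mem_pointwise_smul n b N hn
        have := h hmem
        rw [Submodule.mem_comap] at this
        have h2 : c • b • n ∈ K := this
        rw [smul_smul] at h2
        rwa [mul_comm b c]
      · left
        have hab : a * b ∈ N.annihilator := by
          apply h
          rw [Ideal.span_singleton_mul_span_singleton]
          exact Ideal.subset_span rfl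
        rw [Submodule.mem_colon]
        intro n hn
        have := Submodule.mem_annihilator.mp hab n hn
        rw [this]
        exact K.zero_mem
    · -- span {a} • span {b} • N ≤ comap (c • ·) K
      rw [Submodule.ideal_span_singleton_smul, Submodule.ideal_span_singleton_smul]
      intro m hm
      rw [← SetLike.mem_coe, Submodule.coe_pointwise_smul] at hm
      obtain ⟨m', hm', rfl⟩ := hm
      rw [Submodule.coe_pointwise_smul] at hm'
      obtain ⟨n, hn, rfl⟩ := hm'
      show c • (a • b • n) ∈ K
      have heq : c • (a • b • n) = (a * b * c) • n := by
        rw [smul_smul, smul_smul]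
        congr 1
        ring
      rw [heq]
      exact Submodule.mem_colon.mp habc n hn
  -- membership in colon of pointwise smul
  have hcolon : ∀ a r : R, r ∈ K.colon (a • N) ↔ r * a ∈ K.colon N := by
    intro a r
    simp only [Submodule.mem_colon]
    constructor
    · intro h n hn
      have := h (a • n) (Submodule.smul_mem_pointwise_smul n a N hn)
      rwa [smul_smul] at this
    · intro h m hm
      rw [Set.mem_smul_set] at hm
      obtain ⟨n, hn, rfl⟩ := hm
      rw [smul_smul]
      exact h n hn
  by_cases hP : (K.colon N).IsPrime
  · exact Or.inl hP
  right
  by_cases hrad : (K.colon N).radical.IsPrime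
  · -- case A : the radical is prime
    have hnle : ¬ (K.colon N).radical ≤ K.colon N := by
      intro hle
      exact hP ((le_antisymm hle Ideal.le_radical) ▸ hrad)
    obtain ⟨c, hc_rad, hc⟩ := SetLike.not_le_iff_exists.mp hnle
    refine ⟨c, ?_, ?_⟩
    · intro htop
      have h1 : (1 : R) ∈ K.colon (c • N) := htop ▸ Submodule.mem_top
      rw [hcolon, one_mul] at h1
      exact hc h1
    · intro r s hrs
      rw [hcolon] at hrs
      simp only [hcolon]
      rcases hT r s c hrs with h | h | h
      · rcases hrad.mem_or_mem (Ideal.le_radical h) with h' | h'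
        · exact Or.inl (aux_radmul hIne hT h' hc_rad)
        · exact Or.inr (aux_radmul hIne hT h' hc_rad)
      · exact Or.inl h
      · exact Or.inr h
  · -- case B : the radical is not prime
    have hradne : (K.colon N).radical ≠ ⊤ := fun h => hIne (Ideal.radical_eq_top.mp h)
    obtain ⟨x, hx, y, hy, hxy⟩ := (Ideal.not_isPrime_iff.mp hrad).resolve_left hradne
    have hxyI : x * y ∈ K.colon N := aux_F2 hIne hT hx hy hxy
    have F3 : ∀ z : R, z ∈ (K.colon N).radical → z * x ∈ K.colon N := by
      intro z hz
      have h1 : z + y ∉ (K.colon N).radical := by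
        intro h
        apply hy
        have := sub_mem h hz
        simpa using this
      have h2' : (z + y) * x ∈ (K.colon N).radical := by
        have : (z + y) * x = z * x + x * y := by ring
        rw [this]
        exact add_mem (Ideal.mul_mem_right x _ hz) (Ideal.le_radical hxyI)
      have hzyx := aux_F2 hIne hT h1 hx h2'
      have : z * x = (z + y) * x - x * y := by ring
      rw [this]
      exact sub_mem hzyx hxyI
    refine ⟨x, ?_, ?_⟩
    · intro htop
      have h1 : (1 : R) ∈ K.colon (x • N) := htop ▸ Submodule.mem_top
      rw [hcolon, one_mul] at h1
      exact hx (Ideal.le_radical h1)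
    · intro r s hrs
      rw [hcolon] at hrs
      simp only [hcolon]
      rcases hT r s x hrs with h | h | h
      · -- h : r * s ∈ K.colon N
        by_cases hr : r ∈ (K.colon N).radical
        · exact Or.inl (F3 r hr)
        by_cases hs : s ∈ (K.colon N).radical
        · exact Or.inr (F3 s hs)
        -- step 1 : get r * y ∈ colon (or finish)
        have hstep1 : r * x ∈ K.colon N ∨ s * x ∈ K.colon N ∨ r * y ∈ K.colon N := by
          have hmem : r * x * (s + y) ∈ K.colon N := by
            have : r * x * (s + y) = (r * s) * x + (x * y) * r := by ring
            rw [this]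
            exact add_mem (Ideal.mul_mem_right _ _ h) (Ideal.mul_mem_right _ _ hxyI)
          rcases hT r x (s + y) hmem with h' | h' | h'
          · exact Or.inl h'
          · right; right
            have : r * y = r * (s + y) - r * s := by ring
            rw [this]; exact sub_mem h' h
          · right; left
            have : s * x = x * (s + y) - x * y := by ring
            rw [this]; exact sub_mem h' hxyI
        rcases hstep1 with h1 | h1 | h1
        · exact Or.inl h1
        · exact Or.inr h1
        -- step 2 : get s * y ∈ colon (or finish)
        have hstep2 : r * x ∈ K.colon N ∨ s * x ∈ K.colon N ∨ s * y ∈ K.colon N := by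
          have hmem : s * x * (r + y) ∈ K.colon N := by
            have : s * x * (r + y) = (r * s) * x + (x * y) * s := by ring
            rw [this]
            exact add_mem (Ideal.mul_mem_right _ _ h) (Ideal.mul_mem_right _ _ hxyI)
          rcases hT s x (r + y) hmem with h' | h' | h'
          · exact Or.inr (Or.inl h')
          · right; right
            have : s * y = s * (r + y) - r * s := by ring
            rw [this]; exact sub_mem h' h
          · left
            have : r * x = x * (r + y) - x * y := by ring
            rw [this]; exact sub_mem h' hxyI
        rcases hstep2 with h3 | h3 | h3
        · exact Or.inl h3
        · exact Or.inr h3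
        -- step 3 : the final absorbing argument
        have hmem3 : (r + y) * (s + y) * x ∈ K.colon N := by
          have : (r + y) * (s + y) * x =
              (r * s) * x + (r * y) * x + (s * y) * x + (x * y) * y := by ring
          rw [this]
          exact add_mem (add_mem (add_mem (Ideal.mul_mem_right _ _ h)
            (Ideal.mul_mem_right _ _ h1)) (Ideal.mul_mem_right _ _ h3))
            (Ideal.mul_mem_right _ _ hxyI)
        rcases hT (r + y) (s + y) x hmem3 with h' | h' | h'
        · exfalso
          apply hy
          have hyy : y * y ∈ K.colon N := by
            have : y * y = (r + y) * (s + y) - r * s - r * y - s * y := by ring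
            rw [this]
            exact sub_mem (sub_mem (sub_mem h' h) h1) h3
          exact ⟨2, by rwa [pow_two]⟩
        · left
          have : r * x = (r + y) * x - x * y := by ring
          rw [this]; exact sub_mem h' hxyI
        · right
          have : s * x = (s + y) * x - x * y := by ring
          rw [this]; exact sub_mem h' hxyI
      · exact Or.inl h
      · exact Or.inr h
end
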